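/- Let q be a positive integer, Q = (q+1)/2, n a positive integer, c_1 ≥ c_2 ≥ … ≥ c_n positive integers, and Δ a nonnegative integer with n + q ≤ Δ ≤ c_1. Then the maximum of ∑_{i=1}^n π(x_i) over all vectors (x_1, …, x_n) of nonnegative integers with x_i ≤ c_i for all i and ∑_{i=1}^n x_i ≤ Δ equals n − 1 + π(Δ − n + 1). -/

import Mathlib

/-- Ceiling division of natural numbers: `cdiv a b = ⌈a / b⌉` (for `b > 0`). -/
def cdiv (a b : ℕ) : ℕ := (a + b - 1) / b

/-- `⌈Q⌉` where `Q = (q+1)/2`. -/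
def Qceil (q : ℕ) : ℕ := cdiv (q + 1) 2

/-- `⌊Q⌋` where `Q = (q+1)/2`. -/
def Qfloor (q : ℕ) : ℕ := (q + 1) / 2

/-- `π(Δ) = ⌈Δ/q⌉` if `Δ ≤ q`, and `π(Δ) = ⌈(Δ−q)/⌈Q⌉⌉ + 1` if `Δ > q`. -/
def piF (q Δ : ℕ) : ℕ := if Δ ≤ q then cdiv Δ q else cdiv (Δ - q) (Qceil q) + 1

lemma cdiv_le_iff {b : ℕ} (hb : 0 < b) (a k : ℕ) : cdiv a b ≤ k ↔ a ≤ b * k := by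
  unfold cdiv
  rw [Nat.div_le_iff_le_mul_add_pred hb]
  omega

lemma le_mul_cdiv {b : ℕ} (hb : 0 < b) (a : ℕ) : a ≤ b * cdiv a b :=
  (cdiv_le_iff hb a _).mp le_rfl

lemma cdiv_mono {b : ℕ} (hb : 0 < b) {a a' : ℕ} (h : a ≤ a') : cdiv a b ≤ cdiv a' b := by
  rw [cdiv_le_iff hb]
  exact h.trans (le_mul_cdiv hb a')

lemma cdiv_eq_one {a b : ℕ} (hb : 0 < b) (h1 : 1 ≤ a) (h2 : a ≤ b) : cdiv a b = 1 := by
  have hle : cdiv a b ≤ 1 := (cdiv_le_iff hb a 1).mpr (by omega)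
  have hge : ¬ cdiv a b ≤ 0 := by rw [cdiv_le_iff hb]; omega
  omega

lemma cdiv_succ_le {b : ℕ} (hb : 0 < b) (a : ℕ) : cdiv (a + 1) b ≤ cdiv a b + 1 := by
  rw [cdiv_le_iff hb]
  have h1 := le_mul_cdiv hb a
  have h2 : b * (cdiv a b + 1) = b * cdiv a b + b := by ring
  omega

lemma Qceil_pos (q : ℕ) : 0 < Qceil q := by
  have h : ¬ cdiv (q + 1) 2 ≤ 0 := by
    rw [cdiv_le_iff (by norm_num)]; omega
  unfold Qceil; omega

/-- The key superadditivity fact: for `u, v ≥ 1`,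
`⌈u/R⌉ + ⌈v/R⌉ ≤ ⌈(u+v+q-1)/R⌉` where `R = ⌈Q⌉`. -/
lemma cdiv_superadd_special {q : ℕ} (hq : 0 < q) {u v : ℕ} (hu : 1 ≤ u) (hv : 1 ≤ v) :
    cdiv u (Qceil q) + cdiv v (Qceil q) ≤ cdiv (u + v + q - 1) (Qceil q) := by
  have hR : 0 < Qceil q := Qceil_pos q
  set R := Qceil q with hRdef
  -- bounds relating q and R
  have hQ : cdiv (q + 1) 2 = R := rfl
  have hq2R : q + 1 ≤ 2 * R := by
    have h := le_mul_cdiv (show (0:ℕ) < 2 by norm_num) (q + 1)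
    rw [hQ] at h
    exact h
  have hq2R' : ¬ (q + 1 ≤ 2 * (R - 1)) := by
    rw [← cdiv_le_iff (show (0:ℕ) < 2 by norm_num), hQ]
    omega
  set g := cdiv u R with hgdef
  set h := cdiv v R with hhdef
  have hg1 : 1 ≤ g := by
    have : ¬ cdiv u R ≤ 0 := by rw [cdiv_le_iff hR]; omega
    omega
  have hh1 : 1 ≤ h := by
    have : ¬ cdiv v R ≤ 0 := by rw [cdiv_le_iff hR]; omega
    omega
  have hu' : ¬ (u ≤ R * (g - 1)) := by
    rw [← cdiv_le_iff hR]; omega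
  have hv' : ¬ (v ≤ R * (h - 1)) := by
    rw [← cdiv_le_iff hR]; omega
  have hgoal : ¬ (cdiv (u + v + q - 1) R ≤ g + h - 1) := by
    rw [cdiv_le_iff hR]
    have hid : R * (g + h - 1) = R * (g - 1) + R * (h - 1) + R := by
      rw [← Nat.mul_add, ← Nat.mul_succ]
      congr 1
      omega
    omega
  omega

lemma piF_zero {q : ℕ} (hq : 0 < q) : piF q 0 = 0 := by
  unfold piF
  rw [if_pos (by omega)]
  have h : cdiv 0 q ≤ 0 := (cdiv_le_iff hq 0 0).mpr (by omega)
  omega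

lemma piF_pos {q : ℕ} (hq : 0 < q) {a : ℕ} (ha : 1 ≤ a) : 1 ≤ piF q a := by
  unfold piF
  by_cases h : a ≤ q
  · rw [if_pos h]
    have : ¬ cdiv a q ≤ 0 := by rw [cdiv_le_iff hq]; omega
    omega
  · rw [if_neg h]; omega

lemma piF_eq_one {q : ℕ} (hq : 0 < q) {a : ℕ} (h1 : 1 ≤ a) (h2 : a ≤ q) : piF q a = 1 := by
  unfold piF
  rw [if_pos h2]
  exact cdiv_eq_one hq h1 h2

lemma piF_mono {q : ℕ} (hq : 0 < q) {a b : ℕ} (h : a ≤ b) : piF q a ≤ piF q b := by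
  unfold piF
  by_cases hb' : b ≤ q
  · rw [if_pos (by omega), if_pos hb']
    exact cdiv_mono hq h
  · rw [if_neg hb']
    by_cases ha : a ≤ q
    · rw [if_pos ha]
      have h1 : cdiv a q ≤ 1 := (cdiv_le_iff hq a 1).mpr (by omega)
      omega
    · rw [if_neg ha]
      have := cdiv_mono (Qceil_pos q) (show a - q ≤ b - q by omega)
      omega

lemma piF_succ_le {q : ℕ} (hq : 0 < q) (a : ℕ) : piF q (a + 1) ≤ piF q a + 1 := by
  unfold piF
  by_cases h1 : a + 1 ≤ q
  · rw [if_pos h1, if_pos (by omega)]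
    exact cdiv_succ_le hq a
  · rw [if_neg h1]
    by_cases h2 : a ≤ q
    · rw [if_pos h2]
      have haq : a = q := by omega
      have e1 : a + 1 - q = 1 := by omega
      rw [e1]
      have e2 : cdiv 1 (Qceil q) = 1 := cdiv_eq_one (Qceil_pos q) le_rfl (Qceil_pos q)
      have e3 : cdiv a q = 1 := cdiv_eq_one hq (by omega) (by omega)
      omega
    · rw [if_neg h2]
      have e1 : a + 1 - q = (a - q) + 1 := by omega
      rw [e1]
      have := cdiv_succ_le (Qceil_pos q) (a - q)
      omega

lemma piF_le_sub {q : ℕ} (hq : 0 < q) (a d : ℕ) : piF q a ≤ piF q (a - d) + d := by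
  induction d with
  | zero => simp
  | succ d ih =>
    have step : piF q (a - d) ≤ piF q (a - (d + 1)) + 1 := by
      by_cases h : a - d = 0
      · have h' : a - (d + 1) = 0 := by omega
        rw [h, h']
        omega
      · have he : a - d = (a - (d + 1)) + 1 := by omega
        rw [he]
        exact piF_succ_le hq _
    omega

lemma piF_superadd {q : ℕ} (hq : 0 < q) {a b : ℕ} (ha : 1 ≤ a) (hb : 1 ≤ b) :
    piF q a + piF q b ≤ piF q (a + b - 1) + 1 := by
  by_cases h1 : a ≤ q <;> by_cases h2 : b ≤ q
  · have e1 : piF q a = 1 := piF_eq_one hq ha h1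
    have e2 : piF q b = 1 := piF_eq_one hq hb h2
    have e3 : 1 ≤ piF q (a + b - 1) := piF_pos hq (by omega)
    omega
  · have e1 : piF q a = 1 := piF_eq_one hq ha h1
    have e2 : piF q b ≤ piF q (a + b - 1) := piF_mono hq (by omega)
    omega
  · have e1 : piF q b = 1 := piF_eq_one hq hb h2
    have e2 : piF q a ≤ piF q (a + b - 1) := piF_mono hq (by omega)
    omega
  · unfold piF
    rw [if_neg h1, if_neg h2, if_neg (by omega)]
    have e1 := cdiv_superadd_special hq (show 1 ≤ a - q by omega) (show 1 ≤ b - q by omega)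
    have harg : (a - q) + (b - q) + q - 1 = a + b - 1 - q := by omega
    rw [harg] at e1
    omega

lemma sum_piF_le {q : ℕ} (hq : 0 < q) (x : ℕ → ℕ) (t : Finset ℕ) :
    t.Nonempty → (∀ i ∈ t, 1 ≤ x i) →
    ∑ i ∈ t, piF q (x i) ≤ (t.card - 1) + piF q ((∑ i ∈ t, x i) - (t.card - 1)) := by
  induction t using Finset.induction_on with
  | empty =>
    intro htne _
    exact absurd rfl htne.ne_empty
  | @insert a s ha ih =>
    intro _ hx
    by_cases hs : s = ∅
    · subst hs
      simp
    · have hsne : s.Nonempty := Finset.nonempty_iff_ne_empty.mpr hs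
      have hxs' : ∀ i ∈ s, 1 ≤ x i := fun i hi => hx i (Finset.mem_insert_of_mem hi)
      have IH := ih hsne hxs'
      rw [Finset.sum_insert ha, Finset.sum_insert ha, Finset.card_insert_of_notMem ha]
      set m := s.card with hm'
      have hm : 1 ≤ m := Finset.card_pos.mpr hsne
      set T := ∑ i ∈ s, x i with hT'
      have hT : m ≤ T := by
        calc m = ∑ _i ∈ s, 1 := by simp [hm']
        _ ≤ T := Finset.sum_le_sum hxs'
      have hxa : 1 ≤ x a := hx a (Finset.mem_insert_self a s)
      have h5 := piF_superadd hq hxa (show 1 ≤ T - (m - 1) by omega)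
      have harg : x a + (T - (m - 1)) - 1 = x a + T - m := by omega
      rw [harg] at h5
      have hcard : m + 1 - 1 = m := by omega
      rw [hcard]
      calc piF q (x a) + ∑ i ∈ s, piF q (x i)
          ≤ piF q (x a) + ((m - 1) + piF q (T - (m - 1))) := Nat.add_le_add_left IH _
        _ = (piF q (x a) + piF q (T - (m - 1))) + (m - 1) := by ring
        _ ≤ (piF q (x a + T - m) + 1) + (m - 1) := Nat.add_le_add_right h5 _
        _ = piF q (x a + T - m) + (1 + (m - 1)) := by ring
        _ = m + piF q (x a + T - m) := by
            have h6 : 1 + (m - 1) = m := by omega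
            rw [h6]; ring

/-- The witness vector: `Δ - n + 1` at index `1`, and `1` elsewhere. -/
def xw (Δ n : ℕ) : ℕ → ℕ := fun i => if i = 1 then Δ - n + 1 else 1

lemma xw_one (Δ n : ℕ) : xw Δ n 1 = Δ - n + 1 := if_pos rfl

lemma xw_ne {i : ℕ} (Δ n : ℕ) (h : i ≠ 1) : xw Δ n i = 1 := if_neg h

/-- with sorted capacities and `n + q ≤ Δ ≤ c 1`, the maximum of the
multi-depot formulation `MDF` equals `n − 1 + π(Δ − n + 1)`. -/
theorem mdf_max_middle_case (q : ℕ) (hq : 0 < q) (n : ℕ) (hn : 0 < n)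
    (c : ℕ → ℕ) (hc : ∀ i, 1 ≤ i → i ≤ n → 0 < c i)
    (hsort : ∀ i k, 1 ≤ i → i ≤ k → k ≤ n → c k ≤ c i)
    (Δ : ℕ) (h1 : n + q ≤ Δ) (h2 : Δ ≤ c 1) :
    IsGreatest {v : ℕ | ∃ x : ℕ → ℕ,
      (∀ i, 1 ≤ i → i ≤ n → x i ≤ c i) ∧
      (∑ i ∈ Finset.Icc 1 n, x i ≤ Δ) ∧
      v = ∑ i ∈ Finset.Icc 1 n, piF q (x i)} (n - 1 + piF q (Δ - n + 1)) := by
  have hins : Finset.Icc 1 n = insert 1 (Finset.Icc 2 n) := by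
    ext i
    simp only [Finset.mem_Icc, Finset.mem_insert]
    omega
  have h1notin : (1 : ℕ) ∉ Finset.Icc 2 n := by simp
  have hcard2n : (Finset.Icc 2 n).card = n - 1 := by
    rw [Nat.card_Icc]
    omega
  constructor
  · -- membership: the witness
    refine ⟨xw Δ n, ?_, ?_, ?_⟩
    · intro i hi1 hi2
      by_cases h : i = 1
      · subst h
        rw [xw_one]
        omega
      · rw [xw_ne Δ n h]
        exact hc i hi1 hi2
    · rw [hins, Finset.sum_insert h1notin, xw_one]
      have hrest : ∑ i ∈ Finset.Icc 2 n, xw Δ n i = n - 1 := by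
        rw [Finset.sum_congr rfl (fun i hi =>
          xw_ne Δ n (by simp only [Finset.mem_Icc] at hi; omega))]
        rw [Finset.sum_const, hcard2n, Nat.smul_one_eq_cast, Nat.cast_id]
      rw [hrest]
      omega
    · rw [hins, Finset.sum_insert h1notin, xw_one]
      have hrest : ∑ i ∈ Finset.Icc 2 n, piF q (xw Δ n i) = n - 1 := by
        rw [Finset.sum_congr rfl (fun i hi => by
          rw [xw_ne Δ n (by simp only [Finset.mem_Icc] at hi; omega),
            piF_eq_one hq le_rfl hq])]
        rw [Finset.sum_const, hcard2n, Nat.smul_one_eq_cast, Nat.cast_id]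
      rw [hrest]
      ring
  · -- upper bound
    rintro v ⟨x, hxc, hxs, rfl⟩
    have hsum1 : ∑ i ∈ (Finset.Icc 1 n).filter (fun i => x i ≠ 0), piF q (x i)
        = ∑ i ∈ Finset.Icc 1 n, piF q (x i) := by
      apply Finset.sum_filter_of_ne
      intro i _ hne h0
      rw [h0, piF_zero hq] at hne
      exact hne rfl
    have hsum2 : ∑ i ∈ (Finset.Icc 1 n).filter (fun i => x i ≠ 0), x i
        = ∑ i ∈ Finset.Icc 1 n, x i := by
      apply Finset.sum_filter_of_ne
      intro i _ hne
      exact hne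
    set t := (Finset.Icc 1 n).filter (fun i => x i ≠ 0) with ht'
    rw [← hsum1]
    by_cases htempty : t = ∅
    · rw [htempty]
      simp
    · have htne : t.Nonempty := Finset.nonempty_iff_ne_empty.mpr htempty
      have hxt : ∀ i ∈ t, 1 ≤ x i := by
        intro i hi
        rw [ht', Finset.mem_filter] at hi
        omega
      have key := sum_piF_le hq x t htne hxt
      have hm1 : 1 ≤ t.card := Finset.card_pos.mpr htne
      have hmn : t.card ≤ n := by
        have h := Finset.card_filter_le (Finset.Icc 1 n) (fun i => x i ≠ 0)
        rw [← ht', Nat.card_Icc] at h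
        omega
      set m := t.card with hm'
      set T := ∑ i ∈ t, x i with hT'
      have hTΔ : T ≤ Δ := by rw [hsum2]; exact hxs
      have step1 : piF q (T - (m - 1)) ≤ piF q (T - (m - 1) - (n - m)) + (n - m) :=
        piF_le_sub hq _ _
      have harg : T - (m - 1) - (n - m) = T - (n - 1) := by omega
      rw [harg] at step1
      have step2 : piF q (T - (n - 1)) ≤ piF q (Δ - n + 1) := piF_mono hq (by omega)
      calc ∑ i ∈ t, piF q (x i)
          ≤ (m - 1) + piF q (T - (m - 1)) := key
        _ ≤ (m - 1) + (piF q (T - (n - 1)) + (n - m)) := Nat.add_le_add_left step1 _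
        _ ≤ (m - 1) + (piF q (Δ - n + 1) + (n - m)) :=
            Nat.add_le_add_left (Nat.add_le_add_right step2 _) _
        _ = piF q (Δ - n + 1) + ((m - 1) + (n - m)) := by ring
        _ ≤ piF q (Δ - n + 1) + (n - 1) := Nat.add_le_add_left (by omega) _
        _ = n - 1 + piF q (Δ - n + 1) := by ring
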